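/- In the equal-benefit case E_i ≡ E with nutrient frequencies f_1 ≥ f_2 ≥ ... ≥ f_n > 0 summing to 1, the threshold κ_m at which the m-th response becomes active satisfies the equation (f_m/F_m)(1 + m x) = x where x = 1/(e^{κ_m E} - 1) and F_m = f_1 + ... + f_m; hence κ_m = (1/E)·ln(F_m/f_m - (m-1)). -/

import Mathlib

open Real Finset

theorem threshold_equal_benefit (E : ℝ) (hE : 0 < E) (n : ℕ) (f : ℕ → ℝ)
    (hfpos : ∀ i, 1 ≤ i → i ≤ n → 0 < f i)
    (hfmono : ∀ i j, 1 ≤ i → i ≤ j → j ≤ n → f j ≤ f i)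
    (m : ℕ) (hm : 2 ≤ m) (hmn : m ≤ n) (hstrict : f m < f 1)
    (F : ℝ) (hF : F = ∑ j ∈ Finset.Icc 1 m, f j)
    (κ : ℝ) (hκ : κ = (1 / E) * Real.log (F / f m - (m - 1))) :
    1 < F / f m - (m - 1) ∧
    (f m / F) * (1 + m * (1 / (Real.exp (κ * E) - 1))) = 1 / (Real.exp (κ * E) - 1) := by
  have hfm : 0 < f m := hfpos m (by omega) hmn
  have hFm : (m : ℝ) * f m < F := by
    have h1 : (1 : ℕ) ∈ Finset.Icc 1 m := by simp; omega
    have := Finset.sum_lt_sum (s := Finset.Icc 1 m) (f := fun _ => f m) (g := f)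
      (fun i hi => by
        simp only [Finset.mem_Icc] at hi
        exact hfmono i m hi.1 hi.2 hmn)
      ⟨1, h1, hstrict⟩
    simpa [hF, Nat.card_Icc, mul_comm] using this
  have h1 : 1 < F / f m - (m - 1) := by
    rw [lt_sub_iff_add_lt, lt_div_iff₀ hfm]
    ring_nf
    linarith
  refine ⟨h1, ?_⟩
  have hexp : Real.exp (κ * E) = F / f m - (m - 1) := by
    rw [hκ]
    rw [one_div, inv_mul_eq_div, div_mul_cancel₀ _ hE.ne']
    exact Real.exp_log (by linarith)
  rw [hexp]
  have hden : F / f m - (m - 1) - 1 = (F - m * f m) / f m := by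
    field_simp; ring
  rw [hden]
  have hd : F - m * f m ≠ 0 := by linarith
  have hmpos : (0:ℝ) < m := by exact_mod_cast (by omega : 0 < m)
  have hFpos : 0 < F := by nlinarith
  field_simp
  have hd' : F - f m * m ≠ 0 := by rw [mul_comm]; exact hd
  rw [eq_div_iff hd', add_mul, div_mul_cancel₀ _ hd']
  ring
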